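/- Let a : ℕ → ℝ be a sequence with 1 ≤ a(k) ≤ M for all k ≤ 2n + R, where M ≥ 1, n > R ≥ 1. Then (1/n) · Σ_{k=n+1}^{2n} a(k+R)/a(k−R) ≥ M^{−2R/n}. -/

import Mathlib

open Finset

theorem stmt3 (a : ℕ → ℝ) (M : ℝ) (n R : ℕ) (hM : 1 ≤ M)
    (hR : 1 ≤ R) (hn : R < n)
    (ha : ∀ k ≤ 2 * n + R, 1 ≤ a k ∧ a k ≤ M) :
    (1 / (n : ℝ)) * ∑ k ∈ Finset.Icc (n + 1) (2 * n), a (k + R) / a (k - R) ≥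
      M ^ (-(2 * (R : ℝ) / (n : ℝ))) := by
  have hM0 : (0:ℝ) < M := lt_of_lt_of_le one_pos hM
  have hn0 : (0:ℝ) < n := by exact_mod_cast Nat.pos_of_ne_zero (by omega)
  set s := Finset.Icc (n+1) (2*n) with hs
  have hcard : s.card = n := by rw [hs, Nat.card_Icc]; omega
  have hterm : ∀ k ∈ s, (0:ℝ) ≤ a (k+R) / a (k-R) := by
    intro k hk
    rw [hs, Finset.mem_Icc] at hk
    have h1 := (ha (k+R) (by omega)).1
    have h2 := (ha (k-R) (by omega)).1
    positivity
  -- reindexing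
  have hS1 : ∏ k ∈ s, a (k+R) = ∏ j ∈ Finset.Icc (n+1+R) (2*n+R), a j := by
    rw [← Finset.map_add_right_Icc, Finset.prod_map]
    simp [addRightEmbedding, hs]
  have hS2 : ∏ k ∈ s, a (k-R) = ∏ j ∈ Finset.Icc (n+1-R) (2*n-R), a j := by
    have h : s = Finset.map (addRightEmbedding R) (Finset.Icc (n+1-R) (2*n-R)) := by
      rw [Finset.map_add_right_Icc, hs]; congr 1 <;> omega
    rw [h, Finset.prod_map]
    refine Finset.prod_congr rfl fun j hj => ?_
    simp [addRightEmbedding]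
  set T1 := Finset.Icc (n+1+R) (2*n+R) with hT1
  set T2 := Finset.Icc (n+1-R) (2*n-R) with hT2
  have hT1pos : ∀ j ∈ T1, (1:ℝ) ≤ a j := by
    intro j hj; rw [hT1, Finset.mem_Icc] at hj; exact (ha j (by omega)).1
  have hT2mem : ∀ j ∈ T2, j ≤ 2*n+R := by
    intro j hj; rw [hT2, Finset.mem_Icc] at hj; omega
  -- key product bound : ∏_{T2} a ≤ M^(2R) * ∏_{T1} a
  have hcardle : (T2 \ T1).card ≤ 2*R := by
    have hsub : T2 \ T1 ⊆ Finset.Icc (n+1-R) (n+R) := by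
      intro x hx
      simp only [Finset.mem_sdiff, hT1, hT2, Finset.mem_Icc, not_and, not_le] at hx ⊢
      omega
    refine le_trans (Finset.card_le_card hsub) ?_
    rw [Nat.card_Icc]; omega
  have hdiffle : ∏ j ∈ T2 \ T1, a j ≤ M ^ (2*R) := by
    have h1 : ∏ j ∈ T2 \ T1, a j ≤ ∏ _j ∈ T2 \ T1, M := by
      refine Finset.prod_le_prod ?_ ?_ <;> intro x hx
      · exact le_trans zero_le_one (ha x (hT2mem x (Finset.mem_sdiff.mp hx).1)).1
      · exact (ha x (hT2mem x (Finset.mem_sdiff.mp hx).1)).2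
    rw [Finset.prod_const] at h1
    exact le_trans h1 (pow_le_pow_right₀ hM hcardle)
  have hinterle : ∏ j ∈ T2 ∩ T1, a j ≤ ∏ j ∈ T1, a j := by
    have hsub : T2 ∩ T1 ⊆ T1 := Finset.inter_subset_right
    rw [← Finset.prod_sdiff hsub]
    have hone : (1:ℝ) ≤ ∏ j ∈ T1 \ (T2 ∩ T1), a j := by
      have := Finset.prod_le_prod (s := T1 \ (T2 ∩ T1)) (f := fun _ => (1:ℝ)) (g := a)
        (fun i _ => zero_le_one) (fun i hi => hT1pos i (Finset.mem_sdiff.mp hi).1)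
      simpa using this
    have hip : (0:ℝ) ≤ ∏ j ∈ T2 ∩ T1, a j :=
      Finset.prod_nonneg fun j hj => le_trans zero_le_one (hT1pos j (Finset.inter_subset_right hj))
    nlinarith [hone, hip]
  have hT1nonneg : (0:ℝ) ≤ ∏ j ∈ T1, a j :=
    Finset.prod_nonneg fun j hj => le_trans zero_le_one (hT1pos j hj)
  have hP2le : ∏ j ∈ T2, a j ≤ M ^ (2*R) * ∏ j ∈ T1, a j := by
    calc ∏ j ∈ T2, a j = (∏ j ∈ T2 ∩ T1, a j) * ∏ j ∈ T2 \ T1, a j :=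
          (Finset.prod_inter_mul_prod_diff T2 T1 a).symm
      _ ≤ (∏ j ∈ T1, a j) * M ^ (2*R) := by
          refine mul_le_mul hinterle hdiffle ?_ hT1nonneg
          exact Finset.prod_nonneg fun j hj =>
            le_trans zero_le_one (ha j (hT2mem j (Finset.mem_sdiff.mp hj).1)).1
      _ = M ^ (2*R) * ∏ j ∈ T1, a j := mul_comm _ _
  have hMpow : (0:ℝ) < M ^ (2*R) := pow_pos hM0 _
  have hP2pos : (0:ℝ) < ∏ j ∈ T2, a j :=
    Finset.prod_pos fun j hj => lt_of_lt_of_le one_pos (ha j (hT2mem j hj)).1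
  have hprodge : (M ^ (2*R))⁻¹ ≤ ∏ k ∈ s, a (k+R) / a (k-R) := by
    rw [Finset.prod_div_distrib, hS1, hS2, le_div_iff₀ hP2pos]
    calc (M ^ (2*R))⁻¹ * ∏ j ∈ T2, a j
        ≤ (M ^ (2*R))⁻¹ * (M ^ (2*R) * ∏ j ∈ T1, a j) := by
          exact mul_le_mul_of_nonneg_left hP2le (by positivity)
      _ = ∏ j ∈ T1, a j := by field_simp
  -- AM-GM
  have hw : ∑ _k ∈ s, (1:ℝ)/n = 1 := by
    rw [Finset.sum_const, hcard, nsmul_eq_mul, mul_one_div, div_self hn0.ne']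
  have amgm := Real.geom_mean_le_arith_mean_weighted s (fun _ => (1:ℝ)/n)
    (fun k => a (k+R) / a (k-R)) (fun i _ => by positivity) hw hterm
  rw [Real.finset_prod_rpow s _ hterm ((1:ℝ)/n), ← Finset.mul_sum] at amgm
  refine le_trans ?_ amgm
  have key : ((M ^ (2*R))⁻¹ : ℝ) ^ ((1:ℝ)/n) ≤ (∏ k ∈ s, a (k+R) / a (k-R)) ^ ((1:ℝ)/n) :=
    Real.rpow_le_rpow (by positivity) hprodge (by positivity)
  refine le_trans (le_of_eq ?_) key
  rw [← Real.rpow_natCast M (2*R), ← Real.rpow_neg hM0.le, ← Real.rpow_mul hM0.le]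
  congr 1
  push_cast
  field_simp
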